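/- Pathwise monotonicity of the Shiryaev filter in the observation path: let l > 0, σ > 0, ρ > 0 and π̃ ∈ [0,1]. Let y¹, y²: [0,∞) → ℝ be continuous with y¹(0) = y²(0) = 0 and such that t ↦ y²(t) − y¹(t) is nondecreasing. Then g_{l,ρ}(t,π̃,y¹) ≤ g_{l,ρ}(t,π̃,y²) for all t ≥ 0; moreover, if y¹ = y² on an interval [0,s], then g_{l,ρ}(t,π̃,y¹) = g_{l,ρ}(t,π̃,y²) for all t ∈ [0,s]. -/

import Mathlib

open MeasureTheory ProbabilityTheory Real Set
open scoped ENNReal NNReal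

noncomputable section

namespace QD

variable {Ω : Type*}

/-- The signal process `X_t = B⁰·1_{Θ=0} + B¹·1_{0<Θ≤t}`. -/
def signal (Θ B0 B1 : Ω → ℝ) (t : ℝ) (ω : Ω) : ℝ :=
  (if Θ ω = 0 then B0 ω else 0) + (if 0 < Θ ω ∧ Θ ω ≤ t then B1 ω else 0)

/-- The observation process `Y_t = ∫_0^t X_u du + M_t`. -/
def obs (Θ B0 B1 : Ω → ℝ) (M : ℝ → Ω → ℝ) (t : ℝ) (ω : Ω) : ℝ :=
  (∫ u in (0:ℝ)..t, signal Θ B0 B1 u ω) + M t ω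

/-- The natural filtration `F^Y` of a process `Y` (time index `[0,∞)`). -/
def natFilt (Y : ℝ → Ω → ℝ) (t : ℝ) : MeasurableSpace Ω :=
  ⨆ s ∈ Set.Icc (0:ℝ) t, MeasurableSpace.comap (Y s) Real.measurableSpace

/-- `τ` is a (nonnegative, finite-valued) stopping time of the natural filtration of `Y`. -/
def IsStopTime (Y : ℝ → Ω → ℝ) (τ : Ω → ℝ) : Prop :=
  (∀ ω, 0 ≤ τ ω) ∧ ∀ t : ℝ, MeasurableSet[natFilt Y t] {ω | τ ω ≤ t}

/-- The σ-algebra `F^Y_τ` at a stopping time `τ`. -/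
def stopSigma (F : ℝ → MeasurableSpace Ω) (τ : Ω → ℝ) : MeasurableSpace Ω :=
  MeasurableSpace.generateFrom {A | ∀ t : ℝ, MeasurableSet[F t] (A ∩ {ω | τ ω ≤ t})}

/-- Bayes risk with a time-dependent delay cost `c`:
`R(τ) = P(τ < Θ) + E[1_{Θ≤τ} ∫_Θ^τ c(u) du]`. -/
def risk [MeasurableSpace Ω] (P : Measure Ω) (Θ : Ω → ℝ) (c : ℝ → ℝ) (τ : Ω → ℝ) : ℝ :=
  (P {ω | τ ω < Θ ω}).toReal + ∫ ω, (if Θ ω ≤ τ ω then ∫ u in Θ ω..τ ω, c u else 0) ∂P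

/-- Bayes risk with constant delay cost `c`: `R(τ) = P(τ < Θ) + c·E[(τ-Θ)⁺]`. -/
def riskC [MeasurableSpace Ω] (P : Measure Ω) (Θ : Ω → ℝ) (c : ℝ) (τ : Ω → ℝ) : ℝ :=
  (P {ω | τ ω < Θ ω}).toReal + c * ∫ ω, max (τ ω - Θ ω) 0 ∂P

/-- Value of the detection problem with constant cost: infimum of the Bayes risk over
all stopping times of the natural filtration of the observation `Y`. -/
def value [MeasurableSpace Ω] (P : Measure Ω) (Θ : Ω → ℝ) (c : ℝ) (Y : ℝ → Ω → ℝ) : ℝ :=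
  sInf (riskC P Θ c '' {τ | IsStopTime Y τ})

/-- The exponential distribution with rate `ρ` (density `ρ e^{-ρθ}` on `(0,∞)`). -/
def expMeasure (ρ : ℝ) : Measure ℝ :=
  volume.withDensity ((Set.Ioi (0:ℝ)).indicator fun x => ENNReal.ofReal (ρ * Real.exp (-ρ * x)))

/-- Numerator `N(t)` of the Shiryaev filter for drift `m`, volatility `σv`, rate `ρ`,
initial mass `pit` and observation path `y`. -/
def filterN (m σv ρ pit : ℝ) (y : ℝ → ℝ) (t : ℝ) : ℝ :=
  pit * Real.exp (m / σv ^ 2 * y t - m ^ 2 / (2 * σv ^ 2) * t) +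
    (1 - pit) * ∫ θ in (0:ℝ)..t,
      Real.exp (m / σv ^ 2 * (y t - y θ) - m ^ 2 / (2 * σv ^ 2) * (t - θ)) *
        (ρ * Real.exp (-ρ * θ))

/-- The Shiryaev filter `g_{m,ρ}(t, pit, y) = N(t)/(N(t) + (1-pit)e^{-ρt})`. -/
def filter (m σv ρ pit : ℝ) (y : ℝ → ℝ) (t : ℝ) : ℝ :=
  filterN m σv ρ pit y t / (filterN m σv ρ pit y t + (1 - pit) * Real.exp (-ρ * t))

/-- First time (≥ 0) the function `f` reaches the level `a`. -/
def hit (f : ℝ → ℝ) (a : ℝ) : ℝ :=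
  sInf {t : ℝ | 0 ≤ t ∧ a ≤ f t}

/-- The observation process in the classical (one-point drift) model:
`Y_t = m·(t-Θm)⁺ + σv·W_t`. -/
def obsDelta (m : ℝ) (Θm : Ω → ℝ) (σv : ℝ) (W : ℝ → Ω → ℝ) : ℝ → Ω → ℝ :=
  fun t ω => m * max (t - Θm ω) 0 + σv * W t ω

/-- The hitting time of level `a` by the Shiryaev filter `g_{m,ρ}` applied to the path of `Y`. -/
def tauHit (m σv ρ pit : ℝ) (Y : ℝ → Ω → ℝ) (a : ℝ) (ω : Ω) : ℝ :=
  hit (fun t => filter m σv ρ pit (fun s => Y s ω) t) a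

/-- The conditional probability process `Π̃_t = P(Θ ≤ t | F^Y_t)`. -/
def condProb [MeasurableSpace Ω] (P : Measure Ω) (Θ : Ω → ℝ) (Y : ℝ → Ω → ℝ)
    (t : ℝ) : Ω → ℝ :=
  P[(Set.indicator {ω | Θ ω ≤ t} fun _ => (1:ℝ)) | natFilt Y t]

/-- `W` is a standard Brownian motion (started at 0, continuous paths, centered Gaussian
increments of variance `t-s`, independent increments). -/
structure IsBM [MeasurableSpace Ω] (P : Measure Ω) (W : ℝ → Ω → ℝ) : Prop where
  meas : ∀ t, Measurable (W t)
  start : ∀ ω, W 0 ω = 0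
  cont : ∀ ω, Continuous fun t => W t ω
  gauss : ∀ s t : ℝ, 0 ≤ s → s ≤ t →
    P.map (fun ω => W t ω - W s ω) = gaussianReal 0 (Real.toNNReal (t - s))
  indep : ∀ (k : ℕ) (ts : ℕ → ℝ), Monotone ts → 0 ≤ ts 0 →
    iIndepFun
      (fun (i : Fin k) ω => W (ts (i + 1)) ω - W (ts i) ω) P

end QD


/-- Pathwise monotonicity of the Shiryaev filter in the observation
path: if `y² - y¹` is nondecreasing on `[0,∞)` then `g_{l,ρ}(t,q̃,y¹) ≤ g_{l,ρ}(t,q̃,y²)`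
for all `t ≥ 0`; and if `y¹ = y²` on `[0,s]` then the filters agree on `[0,s]`. -/
theorem shiryaev_filter_mono_in_path (l σv ρ pit : ℝ)
    (hl : 0 < l) (hσ : 0 < σv) (hρ : 0 < ρ) (hpit : pit ∈ Set.Icc (0:ℝ) 1)
    (y₁ y₂ : ℝ → ℝ) (hy₁ : Continuous y₁) (hy₂ : Continuous y₂)
    (h0₁ : y₁ 0 = 0) (h0₂ : y₂ 0 = 0)
    (hmono : MonotoneOn (fun t => y₂ t - y₁ t) (Set.Ici 0)) :
    (∀ t : ℝ, 0 ≤ t → QD.filter l σv ρ pit y₁ t ≤ QD.filter l σv ρ pit y₂ t)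
      ∧ ∀ s : ℝ, (∀ u ∈ Set.Icc (0:ℝ) s, y₁ u = y₂ u) →
          ∀ t ∈ Set.Icc (0:ℝ) s, QD.filter l σv ρ pit y₁ t = QD.filter l σv ρ pit y₂ t := by
  obtain ⟨hp0, hp1⟩ := hpit
  have hκ : 0 < l / σv ^ 2 := div_pos hl (by positivity)
  -- continuity of integrands
  have hcont : ∀ y : ℝ → ℝ, Continuous y → ∀ t : ℝ, Continuous fun θ : ℝ =>
      Real.exp (l / σv ^ 2 * (y t - y θ) - l ^ 2 / (2 * σv ^ 2) * (t - θ)) *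
        (ρ * Real.exp (-ρ * θ)) := by
    intro y hy t
    exact (Real.continuous_exp.comp (by fun_prop)).mul (by fun_prop)
  -- nonnegativity of filterN
  have hNnonneg : ∀ y : ℝ → ℝ, Continuous y → ∀ t : ℝ, 0 ≤ t →
      0 ≤ QD.filterN l σv ρ pit y t := by
    intro y hy t ht
    unfold QD.filterN
    have h1 : 0 ≤ ∫ θ in (0:ℝ)..t,
        Real.exp (l / σv ^ 2 * (y t - y θ) - l ^ 2 / (2 * σv ^ 2) * (t - θ)) *
          (ρ * Real.exp (-ρ * θ)) := by
      apply intervalIntegral.integral_nonneg ht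
      intro u _
      positivity
    have := Real.exp_pos (l / σv ^ 2 * y t - l ^ 2 / (2 * σv ^ 2) * t)
    nlinarith
  -- positivity of denominator
  have hden : ∀ y : ℝ → ℝ, Continuous y → ∀ t : ℝ, 0 ≤ t →
      0 < QD.filterN l σv ρ pit y t + (1 - pit) * Real.exp (-ρ * t) := by
    intro y hy t ht
    unfold QD.filterN
    have h1 : 0 ≤ ∫ θ in (0:ℝ)..t,
        Real.exp (l / σv ^ 2 * (y t - y θ) - l ^ 2 / (2 * σv ^ 2) * (t - θ)) *
          (ρ * Real.exp (-ρ * θ)) := by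
      apply intervalIntegral.integral_nonneg ht
      intro u _
      positivity
    have hE := Real.exp_pos (l / σv ^ 2 * y t - l ^ 2 / (2 * σv ^ 2) * t)
    have hF := Real.exp_pos (-ρ * t)
    rcases lt_or_eq_of_le hp0 with h | h
    · nlinarith
    · rw [← h]; nlinarith
  -- monotonicity of filterN
  have hNmono : ∀ t : ℝ, 0 ≤ t →
      QD.filterN l σv ρ pit y₁ t ≤ QD.filterN l σv ρ pit y₂ t := by
    intro t ht
    unfold QD.filterN
    have hyt : y₁ t ≤ y₂ t := by
      have := hmono (Set.self_mem_Ici) (Set.mem_Ici.2 ht) ht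
      simp only [h0₁, h0₂, sub_zero] at this
      linarith
    have h1 : pit * Real.exp (l / σv ^ 2 * y₁ t - l ^ 2 / (2 * σv ^ 2) * t) ≤
        pit * Real.exp (l / σv ^ 2 * y₂ t - l ^ 2 / (2 * σv ^ 2) * t) := by
      apply mul_le_mul_of_nonneg_left _ hp0
      apply Real.exp_le_exp.2
      have := mul_le_mul_of_nonneg_left hyt hκ.le
      linarith
    have h2 : (∫ θ in (0:ℝ)..t,
        Real.exp (l / σv ^ 2 * (y₁ t - y₁ θ) - l ^ 2 / (2 * σv ^ 2) * (t - θ)) *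
          (ρ * Real.exp (-ρ * θ))) ≤ ∫ θ in (0:ℝ)..t,
        Real.exp (l / σv ^ 2 * (y₂ t - y₂ θ) - l ^ 2 / (2 * σv ^ 2) * (t - θ)) *
          (ρ * Real.exp (-ρ * θ)) := by
      apply intervalIntegral.integral_mono_on ht
        ((hcont y₁ hy₁ t).intervalIntegrable 0 t)
        ((hcont y₂ hy₂ t).intervalIntegrable 0 t)
      intro θ hθ
      have hθ0 : (0:ℝ) ≤ θ := hθ.1
      have hθt : θ ≤ t := hθ.2
      have hd : y₂ θ - y₁ θ ≤ y₂ t - y₁ t :=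
        hmono (Set.mem_Ici.2 hθ0) (Set.mem_Ici.2 ht) hθt
      have hineq : y₁ t - y₁ θ ≤ y₂ t - y₂ θ := by linarith
      apply mul_le_mul_of_nonneg_right _ (by positivity)
      apply Real.exp_le_exp.2
      have := mul_le_mul_of_nonneg_left hineq hκ.le
      linarith
    have h2' := mul_le_mul_of_nonneg_left h2 (by linarith : (0:ℝ) ≤ 1 - pit)
    linarith
  constructor
  · intro t ht
    unfold QD.filter
    have h1 := hNnonneg y₁ hy₁ t ht
    have h2 := hNmono t ht
    have hd1 := hden y₁ hy₁ t ht
    have hd2 := hden y₂ hy₂ t ht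
    have hc : 0 ≤ (1 - pit) * Real.exp (-ρ * t) := by
      have := Real.exp_pos (-ρ * t); nlinarith
    rw [div_le_div_iff₀ hd1 hd2]
    nlinarith [mul_nonneg hc (sub_nonneg.2 h2)]
  · intro s hs t ht
    have hNeq : QD.filterN l σv ρ pit y₁ t = QD.filterN l σv ρ pit y₂ t := by
      unfold QD.filterN
      have hyt : y₁ t = y₂ t := hs t ht
      rw [hyt]
      congr 2
      apply intervalIntegral.integral_congr
      intro θ hθ
      rw [Set.uIcc_of_le ht.1] at hθ
      have : y₁ θ = y₂ θ := hs θ ⟨hθ.1, le_trans hθ.2 ht.2⟩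
      dsimp only
      rw [this]
    unfold QD.filter
    rw [hNeq]


end
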